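/- Let f: S → ℝ be layer-wise (L⁰, L¹)-smooth. Let X = [X_1,…,X_p] ∈ S, let M = [M_1,…,M_p] ∈ S be arbitrary, let t_i > 0, and suppose X⁺ = [X⁺_1,…,X⁺_p] is such that, for each i, X⁺_i minimizes X_i ↦ ⟨M_i, X_i⟩_{(i)} over the ball {X_i : ‖X_i − X_i‖_{(i)} ≤ t_i} centered at X_i. Then f(X⁺) ≤ f(X) + Σ_{i=1}^p [ −t_i ‖∇_i f(X)‖_{(i)⋆} + 2 t_i ‖M_i − ∇_i f(X)‖_{(i)⋆} + ((L⁰_i + L¹_i ‖∇_i f(X)‖_{(i)⋆})/2) t_i² ]. -/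

import Mathlib

noncomputable section
open Finset

/-- Trace inner product `⟨A,B⟩ = tr(AᵀB)` on `m×n` real matrices (viewed as functions). -/
def tip {m n : ℕ} (A B : Fin m → Fin n → ℝ) : ℝ := ∑ a, ∑ b, A a b * B a b

/-- An arbitrary norm on the space of `m×n` real matrices. -/
structure MatNorm (m n : ℕ) where
  N : (Fin m → Fin n → ℝ) → ℝ
  pos : ∀ A, A ≠ 0 → 0 < N A
  zero : N 0 = 0
  smul : ∀ (c : ℝ) (A : Fin m → Fin n → ℝ), N (c • A) = |c| * N A
  triangle : ∀ A B, N (A + B) ≤ N A + N B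

/-- The dual norm `‖A‖⋆ = sup_{‖Z‖ ≤ 1} ⟨A, Z⟩`. -/
def MatNorm.dual {m n : ℕ} (nn : MatNorm m n) (A : Fin m → Fin n → ℝ) : ℝ :=
  sSup {r : ℝ | ∃ Z, nn.N Z ≤ 1 ∧ r = tip A Z}

/-- `Y` minimizes the linear functional `Z ↦ ⟨G, Z⟩` over the ball of radius `t`
centered at `C` (the linear minimization oracle). -/
def IsLMOMin {m n : ℕ} (nn : MatNorm m n) (G C : Fin m → Fin n → ℝ) (t : ℝ)
    (Y : Fin m → Fin n → ℝ) : Prop :=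
  nn.N (Y - C) ≤ t ∧ ∀ Z, nn.N (Z - C) ≤ t → tip G Y ≤ tip G Z

namespace Aux

variable {m n : ℕ}

lemma tip_add_left (A B C : Fin m → Fin n → ℝ) : tip (A + B) C = tip A C + tip B C := by
  simp [tip, add_mul, Finset.sum_add_distrib]

lemma tip_sub_left (A B C : Fin m → Fin n → ℝ) : tip (A - B) C = tip A C - tip B C := by
  simp [tip, sub_mul, Finset.sum_sub_distrib]

lemma tip_sub_right (A B C : Fin m → Fin n → ℝ) : tip A (B - C) = tip A B - tip A C := by
  simp [tip, mul_sub, Finset.sum_sub_distrib]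

lemma tip_neg_left (A B : Fin m → Fin n → ℝ) : tip (-A) B = -tip A B := by
  simp [tip]

lemma tip_neg_right (A B : Fin m → Fin n → ℝ) : tip A (-B) = -tip A B := by
  simp [tip]

lemma tip_smul_right (c : ℝ) (A B : Fin m → Fin n → ℝ) : tip A (c • B) = c * tip A B := by
  simp only [tip, Pi.smul_apply, smul_eq_mul, Finset.mul_sum]
  exact Finset.sum_congr rfl fun a _ => Finset.sum_congr rfl fun b _ => by ring

lemma tip_zero_right (A : Fin m → Fin n → ℝ) : tip A (0 : Fin m → Fin n → ℝ) = 0 := by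
  simp [tip]

lemma N_nonneg (nn : MatNorm m n) (A : Fin m → Fin n → ℝ) : 0 ≤ nn.N A := by
  by_cases h : A = 0
  · simp [h, nn.zero]
  · exact (nn.pos A h).le

lemma N_neg (nn : MatNorm m n) (A : Fin m → Fin n → ℝ) : nn.N (-A) = nn.N A := by
  have := nn.smul (-1) A; simpa using this

lemma N_sum_le (nn : MatNorm m n) {ι : Type*} (s : Finset ι) (F : ι → Fin m → Fin n → ℝ) :
    nn.N (∑ i ∈ s, F i) ≤ ∑ i ∈ s, nn.N (F i) := by
  classical
  induction s using Finset.induction with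
  | empty => simp [nn.zero]
  | @insert a s h ih =>
    rw [Finset.sum_insert h, Finset.sum_insert h]
    exact le_trans (nn.triangle _ _) (by linarith)

/-- basis matrix -/
def E (a : Fin m) (b : Fin n) : Fin m → Fin n → ℝ := fun x y => if x = a ∧ y = b then 1 else 0

lemma expand (A : Fin m → Fin n → ℝ) : A = ∑ a, ∑ b, A a b • E a b := by
  funext x y
  simp only [Finset.sum_apply, Pi.smul_apply, E, smul_eq_mul, mul_ite, mul_one, mul_zero, ite_and]
  rw [Finset.sum_comm]
  simp

lemma abs_entry_le (A : Fin m → Fin n → ℝ) (a : Fin m) (b : Fin n) : |A a b| ≤ ‖A‖ := by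
  calc |A a b| = ‖A a b‖ := rfl
    _ ≤ ‖A a‖ := norm_le_pi_norm (A a) b
    _ ≤ ‖A‖ := norm_le_pi_norm A a

lemma N_le_norm (nn : MatNorm m n) :
    ∃ C : ℝ, 0 ≤ C ∧ ∀ A : Fin m → Fin n → ℝ, nn.N A ≤ C * ‖A‖ := by
  refine ⟨∑ a, ∑ b, nn.N (E a b),
    Finset.sum_nonneg fun a _ => Finset.sum_nonneg fun b _ => N_nonneg nn _, fun A => ?_⟩
  calc nn.N A = nn.N (∑ a, ∑ b, A a b • E a b) := by rw [← expand]
    _ ≤ ∑ a, nn.N (∑ b, A a b • E a b) := N_sum_le nn _ _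
    _ ≤ ∑ a, ∑ b, nn.N (A a b • E a b) := Finset.sum_le_sum fun a _ => N_sum_le nn _ _
    _ = ∑ a, ∑ b, |A a b| * nn.N (E a b) := by simp [nn.smul]
    _ ≤ ∑ a, ∑ b, ‖A‖ * nn.N (E a b) :=
        Finset.sum_le_sum fun a _ => Finset.sum_le_sum fun b _ =>
          mul_le_mul_of_nonneg_right (abs_entry_le A a b) (N_nonneg nn _)
    _ = (∑ a, ∑ b, nn.N (E a b)) * ‖A‖ := by
        rw [Finset.sum_mul]
        exact Finset.sum_congr rfl fun a _ => by
          rw [Finset.sum_mul]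
          exact Finset.sum_congr rfl fun b _ => mul_comm _ _

lemma N_continuous (nn : MatNorm m n) : Continuous nn.N := by
  obtain ⟨C, hC0, hC⟩ := N_le_norm nn
  have key : ∀ A B : Fin m → Fin n → ℝ, nn.N A - nn.N B ≤ C * ‖A - B‖ := by
    intro A B
    have := nn.triangle (A - B) B
    simp only [sub_add_cancel] at this
    linarith [hC (A - B)]
  apply LipschitzWith.continuous (K := C.toNNReal)
  apply LipschitzWith.of_dist_le_mul
  intro A B
  rw [Real.dist_eq, dist_eq_norm]
  have h1 := key A B
  have h2 := key B A
  rw [norm_sub_rev B A] at h2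
  have : (C.toNNReal : ℝ) = max C 0 := Real.coe_toNNReal' C
  rw [this, max_eq_left hC0, abs_le]
  constructor <;> linarith

lemma exists_lower (nn : MatNorm m n) :
    ∃ c : ℝ, 0 < c ∧ ∀ Z : Fin m → Fin n → ℝ, c * ‖Z‖ ≤ nn.N Z := by
  rcases subsingleton_or_nontrivial (Fin m → Fin n → ℝ) with h | h
  · refine ⟨1, one_pos, fun Z => ?_⟩
    have : Z = 0 := Subsingleton.elim Z 0
    simp [this, nn.zero]
  · have hsph : (Metric.sphere (0 : Fin m → Fin n → ℝ) 1).Nonempty :=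
      NormedSpace.sphere_nonempty.mpr zero_le_one
    have hcpt : IsCompact (Metric.sphere (0 : Fin m → Fin n → ℝ) 1) := isCompact_sphere 0 1
    obtain ⟨z₀, hz₀mem, hz₀min⟩ :=
      hcpt.exists_isMinOn hsph (N_continuous nn).continuousOn
    have hz₀ : z₀ ≠ 0 := by
      intro h0
      have := mem_sphere_zero_iff_norm.mp hz₀mem
      rw [h0] at this; simp at this
    refine ⟨nn.N z₀, nn.pos z₀ hz₀, fun Z => ?_⟩
    by_cases hZ : Z = 0
    · simp [hZ, nn.zero]
    · have hnZ : (0:ℝ) < ‖Z‖ := norm_pos_iff.mpr hZ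
      have hu : ‖Z‖⁻¹ • Z ∈ Metric.sphere (0 : Fin m → Fin n → ℝ) 1 := by
        rw [mem_sphere_zero_iff_norm, norm_smul, norm_inv, norm_norm]
        field_simp
      have := hz₀min hu
      simp only [Set.mem_setOf_eq, nn.smul, abs_inv, abs_norm] at this
      calc nn.N z₀ * ‖Z‖ ≤ (‖Z‖⁻¹ * nn.N Z) * ‖Z‖ :=
            mul_le_mul_of_nonneg_right this (norm_nonneg Z)
        _ = nn.N Z := by field_simp

lemma tip_le_abs_sum (A Z : Fin m → Fin n → ℝ) :
    tip A Z ≤ (∑ a, ∑ b, |A a b|) * ‖Z‖ := by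
  calc tip A Z ≤ ∑ a, ∑ b, |A a b * Z a b| :=
        Finset.sum_le_sum fun a _ => Finset.sum_le_sum fun b _ => le_abs_self _
    _ ≤ ∑ a, ∑ b, |A a b| * ‖Z‖ := by
        refine Finset.sum_le_sum fun a _ => Finset.sum_le_sum fun b _ => ?_
        rw [abs_mul]
        exact mul_le_mul_of_nonneg_left (abs_entry_le Z a b) (abs_nonneg _)
    _ = (∑ a, ∑ b, |A a b|) * ‖Z‖ := by
        rw [Finset.sum_mul]
        exact Finset.sum_congr rfl fun a _ => by rw [Finset.sum_mul]

lemma dual_nonempty (nn : MatNorm m n) (A : Fin m → Fin n → ℝ) :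
    {r : ℝ | ∃ Z, nn.N Z ≤ 1 ∧ r = tip A Z}.Nonempty :=
  ⟨0, 0, by simp [nn.zero], by simp [tip]⟩

lemma dual_bddAbove (nn : MatNorm m n) (A : Fin m → Fin n → ℝ) :
    BddAbove {r : ℝ | ∃ Z, nn.N Z ≤ 1 ∧ r = tip A Z} := by
  obtain ⟨c, hc, hlow⟩ := exists_lower nn
  refine ⟨(∑ a, ∑ b, |A a b|) * (1 / c), ?_⟩
  rintro r ⟨Z, hZ, rfl⟩
  have hZn : ‖Z‖ ≤ 1 / c := by
    rw [le_div_iff₀ hc, mul_comm]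
    exact le_trans (hlow Z) hZ
  have habs : (0:ℝ) ≤ ∑ a, ∑ b, |A a b| :=
    Finset.sum_nonneg fun a _ => Finset.sum_nonneg fun b _ => abs_nonneg _
  exact le_trans (tip_le_abs_sum A Z) (mul_le_mul_of_nonneg_left hZn habs)

lemma tip_le_dual (nn : MatNorm m n) (A Z : Fin m → Fin n → ℝ) (hZ : nn.N Z ≤ 1) :
    tip A Z ≤ nn.dual A :=
  le_csSup (dual_bddAbove nn A) ⟨Z, hZ, rfl⟩

lemma dual_nonneg (nn : MatNorm m n) (A : Fin m → Fin n → ℝ) : 0 ≤ nn.dual A := by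
  have := tip_le_dual nn A 0 (by simp [nn.zero])
  simpa [tip] using this

lemma dual_le (nn : MatNorm m n) {A : Fin m → Fin n → ℝ} {r : ℝ}
    (h : ∀ Z, nn.N Z ≤ 1 → tip A Z ≤ r) : nn.dual A ≤ r :=
  csSup_le (dual_nonempty nn A) (by rintro x ⟨Z, hZ, rfl⟩; exact h Z hZ)

lemma tip_le_dual_mul (nn : MatNorm m n) (A H : Fin m → Fin n → ℝ) :
    tip A H ≤ nn.dual A * nn.N H := by
  by_cases hH : H = 0
  · simp [hH, tip_zero_right, nn.zero]
  · have hpos : 0 < nn.N H := nn.pos H hH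
    have hu : nn.N ((nn.N H)⁻¹ • H) ≤ 1 := by
      rw [nn.smul, abs_inv, abs_of_pos hpos, inv_mul_cancel₀ hpos.ne']
    have := tip_le_dual nn A _ hu
    rw [tip_smul_right] at this
    calc tip A H = nn.N H * ((nn.N H)⁻¹ * tip A H) := by field_simp
      _ ≤ nn.N H * nn.dual A := mul_le_mul_of_nonneg_left this hpos.le
      _ = nn.dual A * nn.N H := mul_comm _ _

lemma dual_neg (nn : MatNorm m n) (A : Fin m → Fin n → ℝ) : nn.dual (-A) = nn.dual A := by
  have key : ∀ B : Fin m → Fin n → ℝ, nn.dual (-B) ≤ nn.dual B := by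
    intro B
    refine dual_le nn fun Z hZ => ?_
    have hZ' : nn.N (-Z) ≤ 1 := by rwa [N_neg]
    have := tip_le_dual nn B (-Z) hZ'
    rwa [tip_neg_right, ← tip_neg_left] at this
  have h1 := key A
  have h2 := key (-A)
  rw [neg_neg] at h2
  linarith

lemma dual_sub_comm (nn : MatNorm m n) (A B : Fin m → Fin n → ℝ) :
    nn.dual (A - B) = nn.dual (B - A) := by
  rw [← dual_neg nn (A - B), neg_sub]

lemma dual_add_le (nn : MatNorm m n) (A B : Fin m → Fin n → ℝ) :
    nn.dual (A + B) ≤ nn.dual A + nn.dual B := by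
  refine dual_le nn fun Z hZ => ?_
  rw [tip_add_left]
  exact add_le_add (tip_le_dual nn A Z hZ) (tip_le_dual nn B Z hZ)

lemma dual_le_add_sub (nn : MatNorm m n) (A B : Fin m → Fin n → ℝ) :
    nn.dual A ≤ nn.dual B + nn.dual (A - B) := by
  have : A = B + (A - B) := by abel
  calc nn.dual A = nn.dual (B + (A - B)) := by rw [← this]
    _ ≤ nn.dual B + nn.dual (A - B) := dual_add_le nn B (A - B)

lemma exists_near (nn : MatNorm m n) (A : Fin m → Fin n → ℝ) {ε : ℝ} (hε : 0 < ε) :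
    ∃ Z, nn.N Z ≤ 1 ∧ nn.dual A - ε < tip A Z := by
  have hlt : nn.dual A - ε < sSup {r : ℝ | ∃ Z, nn.N Z ≤ 1 ∧ r = tip A Z} := by
    have : nn.dual A - ε < nn.dual A := by linarith
    exact this
  obtain ⟨r, hr, hlt'⟩ := exists_lt_of_lt_csSup (dual_nonempty nn A) hlt
  obtain ⟨Z, hZ, rfl⟩ := hr
  exact ⟨Z, hZ, hlt'⟩

lemma lmo_tip_le (nn : MatNorm m n) {Mi C Y : Fin m → Fin n → ℝ} {t : ℝ} (ht : 0 < t)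
    (h : IsLMOMin nn Mi C t Y) : tip Mi (Y - C) ≤ -t * nn.dual Mi := by
  have key : ∀ ε : ℝ, 0 < ε → tip Mi (Y - C) ≤ -t * nn.dual Mi + ε := by
    intro ε hε
    obtain ⟨Z, hZ1, hZ2⟩ := exists_near nn Mi (div_pos hε ht)
    have heq : (C - t • Z) - C = -(t • Z) := by abel
    have hW : nn.N ((C - t • Z) - C) ≤ t := by
      rw [heq, N_neg, nn.smul, abs_of_pos ht]
      nlinarith [hZ1]
    have hmin := h.2 _ hW
    have expand : tip Mi (Y - C) ≤ tip Mi ((C - t • Z) - C) := by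
      rw [tip_sub_right, tip_sub_right]
      linarith
    rw [heq, tip_neg_right, tip_smul_right] at expand
    have : -(t * tip Mi Z) ≤ -t * (nn.dual Mi - ε / t) := by nlinarith
    have ht' : t ≠ 0 := ht.ne'
    calc tip Mi (Y - C) ≤ -t * (nn.dual Mi - ε / t) := le_trans expand this
      _ = -t * nn.dual Mi + ε := by field_simp; ring
  exact le_of_forall_pos_le_add key

end Aux

open Aux

/-- One-step descent with an arbitrary search direction `M`: if each `X⁺ᵢ` minimizes
`⟨Mᵢ, ·⟩` over the ball of radius `tᵢ > 0` centered at `Xᵢ`, then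
`f(X⁺) ≤ f(X) + Σᵢ [−tᵢ‖∇ᵢf(X)‖⋆ + 2tᵢ‖Mᵢ − ∇ᵢf(X)‖⋆ + ((L⁰ᵢ + L¹ᵢ‖∇ᵢf(X)‖⋆)/2)tᵢ²]`. -/
theorem stmt_15 {p : ℕ} {m n : Fin p → ℕ}
    (nn : ∀ i, MatNorm (m i) (n i))
    (f : (∀ i, Fin (m i) → Fin (n i) → ℝ) → ℝ)
    (g : (∀ i, Fin (m i) → Fin (n i) → ℝ) → ∀ i, Fin (m i) → Fin (n i) → ℝ)
    (hdiff : ContDiff ℝ 1 f)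
    (hgrad : ∀ X H, fderiv ℝ f X H = ∑ i, tip (g X i) (H i))
    (L0 L1 : Fin p → ℝ) (hL0 : ∀ i, 0 ≤ L0 i) (hL1 : ∀ i, 0 ≤ L1 i)
    (hsmooth : ∀ i X Y, (nn i).dual (g X i - g Y i)
      ≤ (L0 i + L1 i * (nn i).dual (g X i)) * (nn i).N (X i - Y i))
    (X Xp M : ∀ i, Fin (m i) → Fin (n i) → ℝ)
    (t : Fin p → ℝ) (ht : ∀ i, 0 < t i)
    (hupd : ∀ i, IsLMOMin (nn i) (M i) (X i) (t i) (Xp i)) :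
    f Xp ≤ f X + ∑ i,
      (-(t i) * (nn i).dual (g X i) + 2 * t i * (nn i).dual (M i - g X i)
        + (L0 i + L1 i * (nn i).dual (g X i)) / 2 * (t i) ^ 2) := by
  classical
  set D : ∀ i, Fin (m i) → Fin (n i) → ℝ := Xp - X with hD
  set γ : ℝ → ∀ i, Fin (m i) → Fin (n i) → ℝ := fun s => X + s • D with hγdef
  set G : Fin p → ℝ := fun i => (nn i).dual (g X i) with hGdef
  have hDi : ∀ i, D i = Xp i - X i := fun i => rfl
  have hDt : ∀ i, (nn i).N (D i) ≤ t i := fun i => (hupd i).1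
  have hDnn : ∀ i, 0 ≤ (nn i).N (D i) := fun i => N_nonneg (nn i) (D i)
  have hGnn : ∀ i, 0 ≤ G i := fun i => dual_nonneg (nn i) (g X i)
  -- derivative of the path
  have hder : ∀ s : ℝ, HasDerivAt (fun u => f (γ u)) (fderiv ℝ f (γ s) D) s := by
    intro s
    have h1 : HasDerivAt γ D s := by
      have h2 : HasDerivAt (fun u : ℝ => u • D) ((1:ℝ) • D) s := (hasDerivAt_id s).smul_const D
      have h3 := h2.const_add X
      simpa [hγdef] using h3
    exact (((hdiff.differentiable one_ne_zero) (γ s)).hasFDerivAt).comp_hasDerivAt s h1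
  have hγcont : Continuous γ := by
    apply continuous_const.add
    exact continuous_id.smul continuous_const
  have hcont : Continuous (fun s : ℝ => fderiv ℝ f (γ s) D) :=
    ((hdiff.continuous_fderiv one_ne_zero).comp hγcont).clm_apply continuous_const
  have hγ0 : γ 0 = X := by simp [hγdef]
  have hγ1 : γ 1 = Xp := by simp [hγdef, hD]
  have hFTC : f Xp - f X = ∫ s in (0:ℝ)..1, fderiv ℝ f (γ s) D := by
    have h := intervalIntegral.integral_eq_sub_of_hasDerivAt
      (f := fun u => f (γ u)) (f' := fun s => fderiv ℝ f (γ s) D)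
      (fun s _ => hder s) (hcont.intervalIntegrable 0 1)
    rw [h]
    simp only [hγ0, hγ1]
  set A0 : ℝ := ∑ i, tip (g X i) (D i) with hA0
  set K : ℝ := ∑ i, (L0 i + L1 i * G i) * ((nn i).N (D i))^2 with hK
  have hbound : ∀ s ∈ Set.Icc (0:ℝ) 1, fderiv ℝ f (γ s) D ≤ A0 + s * K := by
    intro s hs
    rw [hgrad]
    have hterm : ∀ i, tip (g (γ s) i) (D i)
        ≤ tip (g X i) (D i) + s * ((L0 i + L1 i * G i) * ((nn i).N (D i))^2) := by
      intro i
      have h1 : tip (g (γ s) i) (D i)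
          = tip (g X i) (D i) + tip (g (γ s) i - g X i) (D i) := by
        rw [← tip_add_left, add_sub_cancel]
      have h2 : tip (g (γ s) i - g X i) (D i)
          ≤ (nn i).dual (g (γ s) i - g X i) * (nn i).N (D i) :=
        tip_le_dual_mul (nn i) _ _
      have h3 : (nn i).dual (g (γ s) i - g X i) = (nn i).dual (g X i - g (γ s) i) :=
        dual_sub_comm (nn i) _ _
      have h4 := hsmooth i X (γ s)
      have h5 : (nn i).N (X i - γ s i) = s * (nn i).N (D i) := by
        have hXγ : X i - γ s i = -(s • D i) := by
          simp only [hγdef, Pi.add_apply, Pi.smul_apply]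
          abel
        rw [hXγ, N_neg, (nn i).smul, abs_of_nonneg hs.1]
      have hcoef : 0 ≤ L0 i + L1 i * G i := by
        have := mul_nonneg (hL1 i) (hGnn i); linarith [hL0 i]
      rw [h5] at h4
      rw [h1]
      have h6 : (nn i).dual (g (γ s) i - g X i) * (nn i).N (D i)
          ≤ (L0 i + L1 i * G i) * (s * (nn i).N (D i)) * (nn i).N (D i) := by
        rw [h3]
        exact mul_le_mul_of_nonneg_right h4 (hDnn i)
      nlinarith [hDnn i]
    calc ∑ i, tip (g (γ s) i) (D i)
        ≤ ∑ i, (tip (g X i) (D i) + s * ((L0 i + L1 i * G i) * ((nn i).N (D i))^2)) :=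
          Finset.sum_le_sum fun i _ => hterm i
      _ = A0 + s * K := by
          rw [Finset.sum_add_distrib, ← Finset.mul_sum, hA0, hK]
  have hint : ∫ s in (0:ℝ)..1, fderiv ℝ f (γ s) D ≤ A0 + K / 2 := by
    have h1 : ∫ s in (0:ℝ)..1, fderiv ℝ f (γ s) D ≤ ∫ s in (0:ℝ)..1, (A0 + s * K) := by
      apply intervalIntegral.integral_mono_on zero_le_one
        (hcont.intervalIntegrable 0 1)
        ((continuous_const.add (continuous_id.mul continuous_const)).intervalIntegrable 0 1)
      exact hbound
    have h2 : ∫ s in (0:ℝ)..1, (A0 + s * K) = A0 + K / 2 := by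
      rw [intervalIntegral.integral_add intervalIntegrable_const
        ((intervalIntegral.intervalIntegrable_id).mul_const K)]
      rw [intervalIntegral.integral_mul_const, integral_id, intervalIntegral.integral_const]
      norm_num
      ring
    linarith
  have hmain : f Xp ≤ f X + (A0 + K / 2) := by linarith [hFTC ▸ hint]
  -- now bound A0 + K/2 by the stated sum
  have hsum : A0 + K / 2 ≤ ∑ i,
      (-(t i) * (nn i).dual (g X i) + 2 * t i * (nn i).dual (M i - g X i)
        + (L0 i + L1 i * (nn i).dual (g X i)) / 2 * (t i) ^ 2) := by
    have hrw : A0 + K / 2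
        = ∑ i, (tip (g X i) (D i) + (L0 i + L1 i * G i) * ((nn i).N (D i))^2 / 2) := by
      rw [Finset.sum_add_distrib, hA0, hK, Finset.sum_div]
    rw [hrw]
    refine Finset.sum_le_sum fun i _ => ?_
    have hcoef : 0 ≤ L0 i + L1 i * G i := by
      have := mul_nonneg (hL1 i) (hGnn i); linarith [hL0 i]
    -- linear term
    have hlmo : tip (M i) (D i) ≤ -(t i) * (nn i).dual (M i) := by
      have := lmo_tip_le (nn i) (ht i) (hupd i)
      simpa [hDi] using this
    have hsplit : tip (g X i) (D i) = tip (M i) (D i) + tip (g X i - M i) (D i) := by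
      rw [← tip_add_left, add_sub_cancel]
    have h2 : tip (g X i - M i) (D i) ≤ (nn i).dual (M i - g X i) * t i := by
      calc tip (g X i - M i) (D i)
          ≤ (nn i).dual (g X i - M i) * (nn i).N (D i) := tip_le_dual_mul (nn i) _ _
        _ = (nn i).dual (M i - g X i) * (nn i).N (D i) := by rw [dual_sub_comm]
        _ ≤ (nn i).dual (M i - g X i) * t i :=
            mul_le_mul_of_nonneg_left (hDt i) (dual_nonneg (nn i) _)
    have h3 : (nn i).dual (g X i) ≤ (nn i).dual (M i) + (nn i).dual (M i - g X i) := by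
      have := dual_le_add_sub (nn i) (g X i) (M i)
      rwa [dual_sub_comm (nn i) (g X i) (M i)] at this
    have hquad : (L0 i + L1 i * G i) * ((nn i).N (D i))^2 / 2
        ≤ (L0 i + L1 i * G i) / 2 * (t i) ^ 2 := by
      have hsq : ((nn i).N (D i))^2 ≤ (t i)^2 := by nlinarith [hDnn i, hDt i, ht i]
      nlinarith
    have hdualnn : 0 ≤ (nn i).dual (M i - g X i) := dual_nonneg (nn i) _
    have hGi : G i = (nn i).dual (g X i) := rfl
    nlinarith [ht i]
  linarith
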